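/- For fixed m ≥ 1 and k ≥ 0, define polynomials P_m(x,t) by P_0 = 1, P_1 = 1 − x, and P_m = (1 − x − x^{k+2}(t−1))P_{m−1} − x²P_{m−2} for m ≥ 2. Then the generating function for Motzkin paths of height at most m, weighted by length (in x) and number of k-plateaus (in t), equals P_m(x,t)/P_{m+1}(x,t). -/

import Mathlib

inductive Step : Type
  | U | F | D
  deriving DecidableEq

instance : Fintype Step :=
  ⟨{Step.U, Step.F, Step.D}, fun x => by cases x <;> decide⟩

def stepVal : Step → ℤ
  | .U => 1
  | .F => 0
  | .D => -1

/-- Height of the path after the first `i` steps. -/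
def ht (p : List Step) (i : ℕ) : ℤ := ((p.take i).map stepVal).sum

/-- A Motzkin path: starts and ends at height 0 and stays nonnegative. -/
def IsMotzkin (p : List Step) : Prop :=
  ht p p.length = 0 ∧ ∀ i ≤ p.length, 0 ≤ ht p i

instance : DecidablePred IsMotzkin := fun p => by
  unfold IsMotzkin; infer_instance

/-- Number of ascents: maximal runs of up steps (counted at their last up step). -/
def asc (p : List Step) : ℕ :=
  ((List.range p.length).filter
    (fun i => p[i]? == some Step.U && p[i+1]? != some Step.U)).length

/-- Number of occurrences of `w` as a consecutive subword of `p`. -/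
def countSubword (w p : List Step) : ℕ :=
  ((List.range p.length).filter (fun i => w.isPrefixOf (p.drop i))).length

/-- Number of plateaus: occurrences of a subword U F^k D for some k ≥ 0. -/
def plt (p : List Step) : ℕ :=
  ((List.range p.length).filter (fun i =>
    (List.range p.length).any (fun k =>
      (Step.U :: (List.replicate k Step.F ++ [Step.D])).isPrefixOf (p.drop i)))).length
/-- A k-plateau is an occurrence of the consecutive subword U F^k D. -/
def pltk (k : ℕ) (p : List Step) : ℕ :=
  countSubword (Step.U :: (List.replicate k Step.F ++ [Step.D])) p

/-- The generating function for Motzkin paths of height bounded by m,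
by length (x) and number of k-plateaus (t). -/
noncomputable def FpltkBdd (k m : ℕ) : PowerSeries (Polynomial ℚ) :=
  PowerSeries.mk fun n =>
    ∑ f : Fin n → Step,
      if IsMotzkin (List.ofFn f) ∧ ∀ i ≤ n, ht (List.ofFn f) i ≤ (m : ℤ) then
        (Polynomial.X : Polynomial ℚ) ^ pltk k (List.ofFn f)
      else 0

open List

lemma ht_zero (p : List Step) : ht p 0 = 0 := rfl

lemma ht_cons (x : Step) (p : List Step) (i : ℕ) :
    ht (x :: p) (i + 1) = stepVal x + ht p i := by
  simp [ht, List.take_succ_cons]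

lemma ht_append_left (a b : List Step) {i : ℕ} (h : i ≤ a.length) :
    ht (a ++ b) i = ht a i := by
  simp [ht, List.take_append_of_le_length h]

lemma ht_append_right (a b : List Step) (i : ℕ) :
    ht (a ++ b) (a.length + i) = ht a a.length + ht b i := by
  simp [ht, List.take_append]
  rw [List.take_of_length_le (by simp)]

lemma ht_of_length_le {p : List Step} {i : ℕ} (h : p.length ≤ i) :
    ht p i = ht p p.length := by
  simp [ht, List.take_of_length_le h, List.take_length]

lemma countSubword_eq_countP (w p : List Step) :
    countSubword w p = (List.range p.length).countP (fun i => w.isPrefixOf (p.drop i)) := by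
  rw [countSubword, List.countP_eq_length_filter]

lemma countSubword_nil (w : List Step) : countSubword w [] = 0 := rfl

lemma countSubword_cons (w : List Step) (x : Step) (p : List Step) :
    countSubword w (x :: p) = (if w.isPrefixOf (x :: p) then 1 else 0) + countSubword w p := by
  rw [countSubword_eq_countP, countSubword_eq_countP, List.length_cons,
    List.range_succ_eq_map, List.countP_cons, List.countP_map]
  simp [Function.comp_def, add_comm]

lemma countSubword_append (w a b : List Step) :
    countSubword w (a ++ b) =
      (List.range a.length).countP (fun i => w.isPrefixOf (a.drop i ++ b)) + countSubword w b := by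
  rw [countSubword_eq_countP, countSubword_eq_countP, List.length_append, List.range_add,
    List.countP_append, List.countP_map]
  congr 1
  · apply List.countP_congr
    intro i hi
    rw [List.mem_range] at hi
    rw [List.drop_append_of_le_length (le_of_lt hi)]
  · apply List.countP_congr
    intro i hi
    simp [Function.comp_def, List.drop_append]
    rw [List.drop_of_length_le (by omega), List.nil_append]

instance : Inhabited Step := ⟨Step.F⟩

/-- The k-plateau word. -/
def wd (k : ℕ) : List Step := Step.U :: (List.replicate k Step.F ++ [Step.D])

lemma wd_length (k : ℕ) : (wd k).length = k + 2 := by simp [wd]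

lemma pltk_eq (k : ℕ) (p : List Step) : pltk k p = countSubword (wd k) p := rfl

lemma prefix_short {w s t : List Step} (h : w <+: s ++ t) (hn : w.length ≤ s.length) :
    w <+: s := by
  have h2 := List.prefix_iff_eq_take.mp h
  rw [List.take_append_of_le_length hn] at h2
  rw [h2]; exact List.take_prefix _ _

lemma prefix_split {w s t : List Step} (h : w <+: s ++ t) (hn : s.length ≤ w.length) :
    w.take s.length = s ∧ w.drop s.length <+: t := by
  obtain ⟨u, hu⟩ := h
  have hs : w.take s.length = s := by
    have h1 : (s ++ t).take s.length = s := by simp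
    rw [← hu, List.take_append_of_le_length hn] at h1
    exact h1
  refine ⟨hs, u, ?_⟩
  have hw : w = s ++ w.drop s.length := by
    conv_lhs => rw [← List.take_append_drop s.length w, hs]
  rw [hw, List.append_assoc] at hu
  exact (List.append_cancel_left hu)

lemma ht_replicate_F (n i : ℕ) : ht (List.replicate n Step.F) i = 0 := by
  simp [ht, List.take_replicate, List.map_replicate, stepVal]

lemma ht_add (q : List Step) {i : ℕ} (j : ℕ) (h : i ≤ q.length) :
    ht q (i + j) = ht q i + ht (q.drop i) j := by
  have hl : (q.take i).length = i := by simp [h]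
  have h1 : ht q (i + j) = ht (q.take i ++ q.drop i) ((q.take i).length + j) := by
    rw [List.take_append_drop, hl]
  have h2 : ht q i = ht (q.take i) i := by
    conv_lhs => rw [← List.take_append_drop i q]
    rw [ht_append_left _ _ (le_of_eq hl.symm)]
  rw [h1, ht_append_right, h2, hl]

lemma wd_take {k j : ℕ} (hj : j ≤ k) : (wd k).take (j + 1) = Step.U :: List.replicate j Step.F := by
  simp [wd, List.take_append_of_le_length, hj, List.take_replicate, min_eq_left hj]

lemma wd_drop {k j : ℕ} (hj : j ≤ k) :
    (wd k).drop (j + 1) = List.replicate (k - j) Step.F ++ [Step.D] := by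
  simp [wd, List.drop_append_of_le_length, hj, List.drop_replicate]

lemma claimA {k : ℕ} {q r : List Step} (hnn : ∀ i ≤ q.length, 0 ≤ ht q i)
    (hend : ht q q.length = 0) {i : ℕ} (hi : i < q.length) :
    ((wd k) <+: (q.drop i ++ Step.D :: r)) ↔ (wd k) <+: q.drop i := by
  constructor
  · intro h
    set s := q.drop i with hs
    have hsl : s.length = q.length - i := by simp [hs]
    have hn1 : 1 ≤ s.length := by omega
    by_cases hc : k + 2 ≤ s.length
    · exact prefix_short h (by rw [wd_length]; exact hc)
    · exfalso
      obtain ⟨j, hj⟩ : ∃ j, s.length = j + 1 := ⟨s.length - 1, by omega⟩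
      have hjk : j ≤ k := by omega
      obtain ⟨h1, h2⟩ := prefix_split h (by rw [wd_length]; omega)
      rw [hj, wd_take hjk] at h1
      rw [hj, wd_drop hjk] at h2
      by_cases hjk' : j = k
      · -- s = U :: F^j,  contradicts hend
        subst hjk'
        have hql : q.length = i + (j + 1) := by omega
        have := ht_add q (j + 1) (le_of_lt hi)
        rw [← hs, ← h1] at this
        have hhs : ht (Step.U :: List.replicate j Step.F) (j + 1) = 1 := by
          rw [ht_cons, ht_replicate_F]; simp [stepVal]
        rw [hhs] at this
        have h0 := hnn i (le_of_lt hi)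
        rw [hql, this] at hend
        omega
      · -- k - j ≥ 1, head F can't prefix D :: r
        have : k - j = (k - j - 1) + 1 := by omega
        rw [this, List.replicate_succ] at h2
        rw [List.cons_append, List.cons_prefix_cons] at h2
        exact absurd h2.1 (by simp)
  · intro h
    exact h.trans (List.prefix_append _ _)

lemma claimB {k : ℕ} {q r : List Step} (hnn : ∀ i ≤ q.length, 0 ≤ ht q i) :
    ((wd k) <+: Step.U :: (q ++ Step.D :: r)) ↔ q = List.replicate k Step.F := by
  constructor
  · intro h
    rw [wd, List.cons_prefix_cons] at h
    replace h := h.2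
    by_cases hc : k + 1 ≤ q.length
    · exfalso
      have hw : (List.replicate k Step.F ++ [Step.D]).length = k + 1 := by simp
      have h1 := prefix_short h (by rw [hw]; exact hc)
      have h2 := List.prefix_iff_eq_take.mp h1
      rw [hw] at h2
      have hht : ht q (k + 1) = -1 := by
        rw [ht, ← h2]
        simp [List.map_replicate, stepVal]
      have := hnn (k + 1) hc
      omega
    · push_neg at hc
      have hql : q.length ≤ k := by omega
      obtain ⟨h1, h2⟩ := prefix_split h (by simp; omega)
      rw [List.take_append_of_le_length (by simp [hql]), List.take_replicate,
        min_eq_left hql] at h1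
      rw [List.drop_append_of_le_length (by simp [hql]), List.drop_replicate] at h2
      by_cases hqk : q.length = k
      · rw [← h1, hqk]
      · exfalso
        have : k - q.length = (k - q.length - 1) + 1 := by omega
        rw [this, List.replicate_succ, List.cons_append, List.cons_prefix_cons] at h2
        exact absurd h2.1 (by simp)
  · intro h
    subst h
    exact ⟨r, by simp [wd]⟩

lemma pltk_cons_F (k : ℕ) (p : List Step) : pltk k (Step.F :: p) = pltk k p := by
  rw [pltk_eq, pltk_eq, countSubword_cons]
  have : ¬ (wd k).isPrefixOf (Step.F :: p) = true := by
    rw [List.isPrefixOf_iff_prefix, wd, List.cons_prefix_cons]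
    simp
  simp [this]

lemma pltk_decomp (k : ℕ) {q : List Step} (r : List Step)
    (hnn : ∀ i ≤ q.length, 0 ≤ ht q i) (hend : ht q q.length = 0) :
    pltk k (Step.U :: (q ++ Step.D :: r)) =
      pltk k q + pltk k r + (if q = List.replicate k Step.F then 1 else 0) := by
  rw [pltk_eq, pltk_eq, pltk_eq, countSubword_cons, countSubword_append]
  have hD : countSubword (wd k) (Step.D :: r) = countSubword (wd k) r := by
    rw [countSubword_cons]
    have : ¬ (wd k).isPrefixOf (Step.D :: r) = true := by
      rw [List.isPrefixOf_iff_prefix, wd, List.cons_prefix_cons]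
      simp
    simp [this]
  rw [hD]
  have hcount : (List.range q.length).countP
      (fun i => (wd k).isPrefixOf (q.drop i ++ Step.D :: r)) = countSubword (wd k) q := by
    rw [countSubword_eq_countP]
    apply List.countP_congr
    intro i hi
    rw [List.mem_range] at hi
    rw [Bool.eq_iff_iff, List.isPrefixOf_iff_prefix, List.isPrefixOf_iff_prefix,
      eq_self_iff_true, iff_true]
    exact claimA (r := r) hnn hend hi
  rw [hcount]
  have hif : (if (wd k).isPrefixOf (Step.U :: (q ++ Step.D :: r)) = true then (1:ℕ) else 0) =
      (if q = List.replicate k Step.F then 1 else 0) := by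
    by_cases hq : q = List.replicate k Step.F
    · rw [if_pos hq, if_pos (by rw [List.isPrefixOf_iff_prefix]; exact (claimB hnn).mpr hq)]
    · rw [if_neg hq, if_neg (by
        rw [List.isPrefixOf_iff_prefix]
        exact fun h => hq ((claimB hnn).mp h))]
  rw [hif]
  omega

/-- Boundedness predicate. -/
def bdd (m : ℕ) (p : List Step) : Prop :=
  IsMotzkin p ∧ ∀ i ≤ p.length, ht p i ≤ (m : ℤ)

instance : ∀ m, DecidablePred (bdd m) := fun m p => by unfold bdd; infer_instance

/-- All paths of length n. -/
noncomputable def pathsF (n : ℕ) : Finset (List Step) :=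
  (Finset.univ : Finset (Fin n → Step)).image List.ofFn

lemma mem_pathsF {n : ℕ} {p : List Step} : p ∈ pathsF n ↔ p.length = n := by
  simp only [pathsF, Finset.mem_image, Finset.mem_univ, true_and]
  constructor
  · rintro ⟨f, rfl⟩; simp
  · rintro rfl
    exact ⟨fun i => p.get i, List.ofFn_get p⟩

/-- The weight of a path. -/
noncomputable def wt (k m : ℕ) (p : List Step) : Polynomial ℚ :=
  if bdd m p then (Polynomial.X : Polynomial ℚ) ^ pltk k p else 0

/-- Coefficient sums. -/
noncomputable def S (k m n : ℕ) : Polynomial ℚ := ∑ p ∈ pathsF n, wt k m p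

lemma coeff_FpltkBdd (k m n : ℕ) :
    (PowerSeries.coeff (R := Polynomial ℚ) n) (FpltkBdd k m) = S k m n := by
  rw [FpltkBdd, PowerSeries.coeff_mk, S, pathsF]
  rw [Finset.sum_image (fun f _ g _ h => List.ofFn_injective h)]
  apply Finset.sum_congr rfl
  intro f _
  rw [wt]
  have : bdd m (List.ofFn f) ↔
      (IsMotzkin (List.ofFn f) ∧ ∀ i ≤ n, ht (List.ofFn f) i ≤ (m : ℤ)) := by
    unfold bdd
    simp [List.length_ofFn]
  simp only [this]

lemma ht_cons_F (p : List Step) (i : ℕ) : ht (Step.F :: p) (i + 1) = ht p i := by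
  rw [ht_cons]; simp [stepVal]

lemma bdd_cons_F (m : ℕ) (p : List Step) : bdd m (Step.F :: p) ↔ bdd m p := by
  unfold bdd IsMotzkin
  constructor
  · rintro ⟨⟨he, hnn⟩, hb⟩
    refine ⟨⟨?_, fun i hi => ?_⟩, fun i hi => ?_⟩
    · rw [List.length_cons, ht_cons_F] at he; exact he
    · have := hnn (i + 1) (by simp; omega); rwa [ht_cons_F] at this
    · have := hb (i + 1) (by simp; omega); rwa [ht_cons_F] at this
  · rintro ⟨⟨he, hnn⟩, hb⟩
    refine ⟨⟨?_, fun i hi => ?_⟩, fun i hi => ?_⟩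
    · rw [List.length_cons, ht_cons_F]; exact he
    · match i with
      | 0 => simp [ht_zero]
      | j + 1 => rw [ht_cons_F]; exact hnn j (by simp at hi; omega)
    · match i with
      | 0 => simp [ht_zero]
      | j + 1 => rw [ht_cons_F]; exact hb j (by simp at hi; omega)

lemma wt_nil (k m : ℕ) : wt k m [] = 1 := by
  rw [wt, if_pos, pltk_eq, countSubword_nil, pow_zero]
  refine ⟨⟨rfl, ?_⟩, ?_⟩ <;> intro i hi <;>
    · simp only [List.length_nil, Nat.le_zero] at hi
      subst hi
      simp [ht_zero]

lemma wt_cons_F (k m : ℕ) (p : List Step) : wt k m (Step.F :: p) = wt k m p := by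
  rw [wt, wt, pltk_cons_F]
  congr 1
  simp [bdd_cons_F]

lemma wt_cons_D (k m : ℕ) (p : List Step) : wt k m (Step.D :: p) = 0 := by
  rw [wt, if_neg]
  rintro ⟨⟨-, hnn⟩, -⟩
  have := hnn 1 (by simp)
  rw [ht_cons] at this
  simp [stepVal, ht_zero] at this

lemma step_sum (f : Step → Polynomial ℚ) :
    ∑ x : Step, f x = f Step.U + f Step.F + f Step.D := by
  have : (Finset.univ : Finset Step) = {Step.U, Step.F, Step.D} := by decide
  rw [this]
  simp [Finset.sum_insert, add_assoc]

lemma sum_pathsF_succ (n : ℕ) (g : List Step → Polynomial ℚ) :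
    ∑ p ∈ pathsF (n + 1), g p = ∑ x : Step, ∑ p ∈ pathsF n, g (x :: p) := by
  rw [← Finset.sum_product']
  apply Finset.sum_nbij' (i := fun p => (p.headI, p.tail))
    (j := fun z => z.1 :: z.2)
  · intro p hp
    rw [mem_pathsF] at hp
    match p with
    | x :: q => simp [mem_pathsF]; simpa using hp
  · intro z hz
    simp only [Finset.mem_product] at hz
    rw [mem_pathsF] at hz ⊢
    simp [hz.2]
  · intro p hp
    rw [mem_pathsF] at hp
    match p with
    | x :: q => rfl
  · intro z hz; rfl
  · intro p hp
    rw [mem_pathsF] at hp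
    match p with
    | x :: q => rfl

lemma ht_glue₁ (q r : List Step) {i : ℕ} (hi : i ≤ q.length) :
    ht (Step.U :: (q ++ Step.D :: r)) (i + 1) = 1 + ht q i := by
  rw [ht_cons, ht_append_left _ _ hi]; rfl

lemma ht_glue₂ (q r : List Step) (j : ℕ) :
    ht (Step.U :: (q ++ Step.D :: r)) (q.length + 2 + j) = ht q q.length + ht r j := by
  have h1 : q.length + 2 + j = (q.length + (1 + j)) + 1 := by omega
  rw [h1, ht_cons, ht_append_right]
  have h2 : ht (Step.D :: r) (1 + j) = -1 + ht r j := by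
    rw [show 1 + j = j + 1 from by omega, ht_cons]; rfl
  rw [h2, stepVal]
  ring

lemma glue_length (q r : List Step) :
    (Step.U :: (q ++ Step.D :: r)).length = q.length + r.length + 2 := by
  simp; omega

lemma bdd_glue {m : ℕ} {q r : List Step} (hq : bdd m q) (hr : bdd (m + 1) r) :
    bdd (m + 1) (Step.U :: (q ++ Step.D :: r)) := by
  obtain ⟨⟨hqe, hqn⟩, hqb⟩ := hq
  obtain ⟨⟨hre, hrn⟩, hrb⟩ := hr
  have key : ∀ i ≤ (Step.U :: (q ++ Step.D :: r)).length,
      0 ≤ ht (Step.U :: (q ++ Step.D :: r)) i ∧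
        ht (Step.U :: (q ++ Step.D :: r)) i ≤ ((m : ℤ) + 1) := by
    intro i hi
    rw [glue_length] at hi
    rcases Nat.eq_zero_or_pos i with rfl | hpos
    · rw [ht_zero]; constructor <;> [exact le_refl 0; positivity]
    rcases Nat.lt_or_ge i (q.length + 2) with hcase | hcase
    · obtain ⟨i', rfl⟩ : ∃ i', i = i' + 1 := ⟨i - 1, by omega⟩
      have hi' : i' ≤ q.length := by omega
      rw [ht_glue₁ _ _ hi']
      have h1 := hqn i' hi'
      have h2 := hqb i' hi'
      omega
    · obtain ⟨j, rfl⟩ : ∃ j, i = q.length + 2 + j := ⟨i - (q.length + 2), by omega⟩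
      have hj : j ≤ r.length := by omega
      rw [ht_glue₂, hqe]
      have h1 := hrn j hj
      have h2 := hrb j hj
      push_cast at h2 ⊢
      omega
  refine ⟨⟨?_, fun i hi => (key i hi).1⟩, fun i hi => ?_⟩
  · rw [glue_length, show q.length + r.length + 2 = q.length + 2 + r.length from by omega,
      ht_glue₂, hqe, hre]
    ring
  · have := (key i hi).2
    push_cast
    omega

lemma glue_inj {q₁ r₁ q₂ r₂ : List Step}
    (h1 : ∀ i ≤ q₁.length, 0 ≤ ht q₁ i) (he1 : ht q₁ q₁.length = 0)
    (h2 : ∀ i ≤ q₂.length, 0 ≤ ht q₂ i) (he2 : ht q₂ q₂.length = 0)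
    (heq : q₁ ++ Step.D :: r₁ = q₂ ++ Step.D :: r₂) : q₁ = q₂ ∧ r₁ = r₂ := by
  have key : ∀ (a b : List Step) (s t : List Step),
      (∀ i ≤ a.length, 0 ≤ ht a i) → ht a a.length = 0 →
      (∀ i ≤ b.length, 0 ≤ ht b i) → ht b b.length = 0 →
      a ++ Step.D :: s = b ++ Step.D :: t → ¬ (a.length < b.length) := by
    intro a b s t _ hea hbn _ heab hlt
    have htake : b.take (a.length + 1) = a ++ [Step.D] := by
      have e1 : (a ++ Step.D :: s).take (a.length + 1) = a ++ [Step.D] := by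
        rw [List.take_append]
        simp
      rw [heab] at e1
      rwa [List.take_append_of_le_length (by omega)] at e1
    have hb : ht b (a.length + 1) = -1 := by
      rw [ht, htake]
      simp [stepVal]
      have : ht a a.length = ((a.map stepVal).sum) := by rw [ht, List.take_length]
      rw [this] at hea
      omega
    have := hbn (a.length + 1) (by omega)
    omega
  have hlen : q₁.length = q₂.length := by
    rcases Nat.lt_trichotomy q₁.length q₂.length with h | h | h
    · exact absurd h (key q₁ q₂ r₁ r₂ h1 he1 h2 he2 heq)
    · exact h
    · exact absurd h (key q₂ q₁ r₂ r₁ h2 he2 h1 he1 heq.symm)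
  obtain ⟨hq, hr⟩ := List.append_inj heq hlen
  exact ⟨hq, by injection hr⟩

lemma ht_take (p : List Step) (a i : ℕ) (h : i ≤ a) : ht (p.take a) i = ht p i := by
  simp [ht, List.take_take, min_eq_left h]

lemma ht_succ_get (p : List Step) (i : ℕ) (h : i < p.length) :
    ht p (i + 1) = ht p i + stepVal p[i] := by
  rw [ht, ht, List.map_take, List.map_take,
    List.sum_take_succ _ _ (by simpa using h), List.getElem_map]

lemma exists_decomp {m : ℕ} {p : List Step} (h : bdd (m + 1) (Step.U :: p)) :
    ∃ q r, bdd m q ∧ bdd (m + 1) r ∧ p = q ++ Step.D :: r := by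
  obtain ⟨⟨he, hnn⟩, hb⟩ := h
  have hlen : (Step.U :: p).length = p.length + 1 := by simp
  rw [hlen] at he
  have hex : ∃ j, ht (Step.U :: p) (j + 1) = 0 := ⟨p.length, he⟩
  classical
  have hj0 : ht (Step.U :: p) (Nat.find hex + 1) = 0 := Nat.find_spec hex
  have hjmin : ∀ l < Nat.find hex, ht (Step.U :: p) (l + 1) ≠ 0 :=
    fun l hl => Nat.find_min hex hl
  have hj_le : Nat.find hex ≤ p.length := by
    by_contra hc
    push_neg at hc
    exact hjmin p.length hc he
  have hpos : 1 ≤ Nat.find hex := by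
    rcases Nat.eq_zero_or_pos (Nat.find hex) with hz | h
    · exfalso
      have h1 : ht (Step.U :: p) 1 = 1 := by
        rw [show (1:ℕ) = 0 + 1 from rfl, ht_cons, ht_zero, stepVal, add_zero]
      rw [hz, h1] at hj0
      exact one_ne_zero hj0
    · exact h
  obtain ⟨j', hj'⟩ : ∃ j', Nat.find hex = j' + 1 := ⟨Nat.find hex - 1, by omega⟩
  rw [hj'] at hj0 hjmin hj_le
  have hmid : ∀ l, 1 ≤ l → l ≤ j' + 1 → 1 ≤ ht (Step.U :: p) l := by
    intro l h1 h2
    have hn := hnn l (by simp; omega)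
    have hne := hjmin (l - 1) (by omega)
    rw [show l - 1 + 1 = l from by omega] at hne
    omega
  have htUj : ht (Step.U :: p) (j' + 1) = 1 := by
    have h1 := hmid (j' + 1) (by omega) (le_refl _)
    have h2 : ht (Step.U :: p) (j' + 1 + 1) =
        ht (Step.U :: p) (j' + 1) + stepVal ((Step.U :: p)[j' + 1]'(by simp; omega)) :=
      ht_succ_get _ _ (by simp; omega)
    have h3 : stepVal ((Step.U :: p)[j' + 1]'(by simp; omega)) ≥ -1 := by
      cases hc : (Step.U :: p)[j' + 1]'(by simp; omega) <;> simp [stepVal]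
    omega
  have hgetp : (Step.U :: p)[j' + 1]'(by simp; omega) = p[j']'(by omega) :=
    List.getElem_cons_succ ..
  have hstepD : p[j']'(by omega) = Step.D := by
    have h2 : ht (Step.U :: p) (j' + 1 + 1) =
        ht (Step.U :: p) (j' + 1) + stepVal ((Step.U :: p)[j' + 1]'(by simp; omega)) :=
      ht_succ_get _ _ (by simp; omega)
    rw [hgetp] at h2
    have hsv : stepVal (p[j']'(by omega)) = -1 := by omega
    revert hsv
    cases p[j']'(by omega) <;> simp [stepVal]
  refine ⟨p.take j', p.drop (j' + 1), ?_, ?_, ?_⟩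
  · have hlq : (p.take j').length = j' := by simp; omega
    have hhtq : ∀ i ≤ j', ht (p.take j') i = ht (Step.U :: p) (i + 1) - 1 := by
      intro i hi
      rw [ht_take p j' i hi, ht_cons, stepVal]
      ring
    refine ⟨⟨?_, fun i hi => ?_⟩, fun i hi => ?_⟩
    · rw [hlq, hhtq _ (le_refl _), htUj]
      ring
    · rw [hlq] at hi
      rw [hhtq i hi]
      have := hmid (i + 1) (by omega) (by omega)
      omega
    · rw [hlq] at hi
      rw [hhtq i hi]
      have := hb (i + 1) (by simp; omega)
      push_cast at this ⊢
      omega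
  · have hlr : (p.drop (j' + 1)).length = p.length - (j' + 1) := by simp
    have hhtr : ∀ i, ht (p.drop (j' + 1)) i = ht (Step.U :: p) (j' + 1 + 1 + i) := by
      intro i
      have h1 := ht_add (Step.U :: p) (i := j' + 1 + 1) i (by simp; omega)
      rw [List.drop_succ_cons] at h1
      rw [h1, hj0, zero_add]
    refine ⟨⟨?_, fun i hi => ?_⟩, fun i hi => ?_⟩
    · rw [hhtr, hlr, show j' + 1 + 1 + (p.length - (j' + 1)) = p.length + 1 from by omega]
      exact he
    · rw [hhtr]
      exact hnn (j' + 1 + 1 + i) (by simp; omega)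
    · rw [hhtr]
      exact hb (j' + 1 + 1 + i) (by simp; omega)
  · conv_lhs => rw [← List.take_append_drop j' p]
    congr 1
    rw [List.drop_eq_getElem_cons (by omega), hstepD]

lemma pltk_replicate (k n : ℕ) : pltk k (List.replicate n Step.F) = 0 := by
  induction n with
  | zero => rfl
  | succ n ih => rw [List.replicate_succ, pltk_cons_F, ih]

lemma bdd_replicate (k m : ℕ) : bdd m (List.replicate k Step.F) := by
  refine ⟨⟨?_, fun i _ => ?_⟩, fun i _ => ?_⟩ <;> rw [ht_replicate_F] <;> positivity

/-- Weight with plateau correction for the inner path. -/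
noncomputable def wti (k m : ℕ) (q : List Step) : Polynomial ℚ :=
  if bdd m q then
    (Polynomial.X : Polynomial ℚ) ^ (pltk k q + if q = List.replicate k Step.F then 1 else 0)
  else 0

lemma sum_wti (k m a : ℕ) :
    ∑ q ∈ pathsF a, wti k m q =
      S k m a + (if a = k then (Polynomial.X : Polynomial ℚ) - 1 else 0) := by
  rw [S]
  have key : ∀ q ∈ pathsF a, wti k m q = wt k m q +
      (if q = List.replicate k Step.F ∧ a = k then (Polynomial.X : Polynomial ℚ) - 1 else 0) := by
    intro q hq
    rw [mem_pathsF] at hq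
    by_cases hrep : q = List.replicate k Step.F
    · have hak : a = k := by rw [← hq, hrep]; simp
      subst hrep
      rw [wti, wt, if_pos (bdd_replicate k m), if_pos (bdd_replicate k m)]
      simp only [pltk_replicate, hak, if_pos rfl, and_self, if_true, pow_zero, pow_add, pow_one,
        zero_add]
      ring
    · simp only [wti, wt, hrep, if_false, false_and, add_zero]
  rw [Finset.sum_congr rfl key, Finset.sum_add_distrib]
  congr 1
  by_cases hak : a = k
  · subst hak
    rw [Finset.sum_eq_single (List.replicate a Step.F)]
    · simp
    · intro q _ hne
      rw [if_neg (fun h => hne h.1)]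
    · intro habs
      exact absurd (mem_pathsF.mpr (by simp)) habs
  · rw [if_neg hak, Finset.sum_eq_zero]
    intro q hq
    rw [if_neg (fun h => hak h.2)]

lemma sum_U (k m n : ℕ) :
    ∑ p ∈ pathsF (n + 1), wt k (m + 1) (Step.U :: p) =
      ∑ ab ∈ Finset.HasAntidiagonal.antidiagonal n,
        (∑ q ∈ pathsF ab.1, wti k m q) * (∑ r ∈ pathsF ab.2, wt k (m + 1) r) := by
  classical
  have rhs1 : ∀ ab : ℕ × ℕ,
      (∑ q ∈ pathsF ab.1, wti k m q) * (∑ r ∈ pathsF ab.2, wt k (m + 1) r) =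
        ∑ z ∈ pathsF ab.1 ×ˢ pathsF ab.2, wti k m z.1 * wt k (m + 1) z.2 := by
    intro ab
    rw [Finset.sum_mul_sum, Finset.sum_product]
  rw [Finset.sum_congr rfl (fun ab _ => rhs1 ab), Finset.sum_sigma']
  set B := (Finset.HasAntidiagonal.antidiagonal n).sigma (fun ab => pathsF ab.1 ×ˢ pathsF ab.2) with hB
  rw [← Finset.sum_filter_of_ne
    (p := fun p => bdd (m + 1) (Step.U :: p))
    (fun p _ hne => by
      by_contra hc
      exact hne (by rw [wt, if_neg hc]))]
  rw [← Finset.sum_filter_of_ne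
    (s := B)
    (p := fun z => bdd m z.2.1 ∧ bdd (m + 1) z.2.2)
    (fun z _ hne => by
      constructor
      · by_contra hc
        exact hne (by rw [wti, if_neg hc, zero_mul])
      · by_contra hc
        exact hne (by rw [wt, if_neg hc, mul_zero]))]
  symm
  refine Finset.sum_bij (fun z _ => z.2.1 ++ Step.D :: z.2.2) ?_ ?_ ?_ ?_
  · -- maps into the target filter
    rintro ⟨⟨a, b⟩, q, r⟩ hz
    simp only [Finset.mem_filter, hB, Finset.mem_sigma, Finset.mem_product,
      Finset.HasAntidiagonal.mem_antidiagonal, mem_pathsF] at hz ⊢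
    obtain ⟨⟨hab, hq, hr⟩, hbq, hbr⟩ := hz
    refine ⟨by simp [hq, hr]; omega, bdd_glue hbq hbr⟩
  · -- injective
    rintro ⟨⟨a₁, b₁⟩, q₁, r₁⟩ hz₁ ⟨⟨a₂, b₂⟩, q₂, r₂⟩ hz₂ heq
    simp only [Finset.mem_filter, hB, Finset.mem_sigma, Finset.mem_product,
      Finset.HasAntidiagonal.mem_antidiagonal, mem_pathsF] at hz₁ hz₂
    obtain ⟨⟨hab₁, hq₁, hr₁⟩, hbq₁, hbr₁⟩ := hz₁
    obtain ⟨⟨hab₂, hq₂, hr₂⟩, hbq₂, hbr₂⟩ := hz₂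
    obtain ⟨hq, hr⟩ := glue_inj hbq₁.1.2 hbq₁.1.1 hbq₂.1.2 hbq₂.1.1 heq
    dsimp only at hq hr
    have ha : a₁ = a₂ := by rw [← hq₁, ← hq₂, hq]
    have hb' : b₁ = b₂ := by rw [← hr₁, ← hr₂, hr]
    subst ha; subst hb'; subst hq; subst hr
    rfl
  · -- surjective
    intro p hp
    simp only [Finset.mem_filter, mem_pathsF] at hp
    obtain ⟨hlp, hbp⟩ := hp
    obtain ⟨q, r, hbq, hbr, rfl⟩ := exists_decomp hbp
    have hlen : q.length + (r.length + 1) = n + 1 := by simpa using hlp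
    refine ⟨⟨(q.length, r.length), (q, r)⟩, ?_, rfl⟩
    simp only [Finset.mem_filter, hB, Finset.mem_sigma, Finset.mem_product,
      Finset.HasAntidiagonal.mem_antidiagonal, mem_pathsF]
    exact ⟨⟨by omega, by trivial, by trivial⟩, hbq, hbr⟩
  · -- weights agree
    rintro ⟨⟨a, b⟩, q, r⟩ hz
    simp only [Finset.mem_filter, hB, Finset.mem_sigma, Finset.mem_product,
      Finset.HasAntidiagonal.mem_antidiagonal, mem_pathsF] at hz
    obtain ⟨-, hbq, hbr⟩ := hz
    show wti k m q * wt k (m + 1) r = wt k (m + 1) (Step.U :: (q ++ Step.D :: r))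
    rw [wti, wt, wt, if_pos hbq, if_pos hbr, if_pos (bdd_glue hbq hbr),
      pltk_decomp k r hbq.1.2 hbq.1.1, ← pow_add]
    congr 1
    omega

lemma pathsF_zero : pathsF 0 = {([] : List Step)} := by
  ext p; simp [mem_pathsF, List.length_eq_zero_iff]

lemma S_zero (k m : ℕ) : S k m 0 = 1 := by
  rw [S, pathsF_zero, Finset.sum_singleton, wt_nil]

lemma S_one (k m : ℕ) : S k m 1 = 1 := by
  rw [S, show (1 : ℕ) = 0 + 1 from rfl, sum_pathsF_succ, step_sum, pathsF_zero]
  simp only [Finset.sum_singleton, wt_cons_D, wt_cons_F, wt_nil]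
  have hU : wt k m [Step.U] = 0 := by
    rw [wt, if_neg]
    rintro ⟨⟨he, -⟩, -⟩
    rw [List.length_cons, List.length_nil, show (0:ℕ) + 1 = 0 + 1 from rfl, ht_cons,
      ht_zero, stepVal] at he
    simp at he
  rw [hU]
  ring

lemma S_rec (k m n : ℕ) : S k (m + 1) (n + 2) = S k (m + 1) (n + 1) +
    ∑ ab ∈ Finset.HasAntidiagonal.antidiagonal n,
      (S k m ab.1 + (if ab.1 = k then (Polynomial.X : Polynomial ℚ) - 1 else 0)) *
        S k (m + 1) ab.2 := by
  rw [S, show n + 2 = (n + 1) + 1 from rfl, sum_pathsF_succ, step_sum]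
  have hF : ∑ p ∈ pathsF (n + 1), wt k (m + 1) (Step.F :: p) = S k (m + 1) (n + 1) := by
    rw [S]; exact Finset.sum_congr rfl fun p _ => wt_cons_F k (m + 1) p
  have hD : ∑ p ∈ pathsF (n + 1), wt k (m + 1) (Step.D :: p) = 0 :=
    Finset.sum_eq_zero fun p _ => wt_cons_D k (m + 1) p
  rw [hF, hD, add_zero, sum_U]
  have h4 : ∀ ab ∈ Finset.HasAntidiagonal.antidiagonal n,
      (∑ q ∈ pathsF ab.1, wti k m q) * (∑ r ∈ pathsF ab.2, wt k (m + 1) r) =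
        (S k m ab.1 + (if ab.1 = k then (Polynomial.X : Polynomial ℚ) - 1 else 0)) *
          S k (m + 1) ab.2 := by
    intro ab _
    rw [sum_wti]
    rfl
  rw [Finset.sum_congr rfl h4]
  ring

lemma funEq (k m : ℕ) :
    FpltkBdd k (m + 1) * (1 - PowerSeries.X - PowerSeries.X ^ (k + 2)
        * (PowerSeries.C (R := Polynomial ℚ) Polynomial.X - 1)
      - PowerSeries.X ^ 2 * FpltkBdd k m) = 1 := by
  have key : FpltkBdd k (m + 1) = 1 + PowerSeries.X * FpltkBdd k (m + 1) +
      PowerSeries.X ^ 2 * ((FpltkBdd k m +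
        PowerSeries.C (R := Polynomial ℚ) (Polynomial.X - 1) * PowerSeries.X ^ k) *
          FpltkBdd k (m + 1)) := by
    refine PowerSeries.ext fun n => ?_
    set G : PowerSeries (Polynomial ℚ) := FpltkBdd k m +
      PowerSeries.C (R := Polynomial ℚ) (Polynomial.X - 1) * PowerSeries.X ^ k with hG
    have hGcoeff : ∀ a, PowerSeries.coeff (R := Polynomial ℚ) a G =
        S k m a + (if a = k then (Polynomial.X : Polynomial ℚ) - 1 else 0) := by
      intro a
      rw [hG, map_add, coeff_FpltkBdd, PowerSeries.coeff_C_mul, PowerSeries.coeff_X_pow]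
      by_cases hak : a = k <;> simp [hak]
    match n with
    | 0 =>
      have e2 : PowerSeries.coeff (R := Polynomial ℚ) 0
          (PowerSeries.X ^ 2 * (G * FpltkBdd k (m + 1))) = 0 := by
        rw [pow_two, mul_assoc, PowerSeries.coeff_zero_X_mul]
      rw [map_add, map_add, e2, coeff_FpltkBdd, S_zero, PowerSeries.coeff_one, if_pos rfl,
        PowerSeries.coeff_zero_X_mul]
      ring
    | 1 =>
      have e1 : PowerSeries.coeff (R := Polynomial ℚ) 1
          (PowerSeries.X * FpltkBdd k (m + 1)) = S k (m + 1) 0 := by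
        rw [show (1:ℕ) = 0 + 1 from rfl, PowerSeries.coeff_succ_X_mul, coeff_FpltkBdd]
      have e2 : PowerSeries.coeff (R := Polynomial ℚ) 1
          (PowerSeries.X ^ 2 * (G * FpltkBdd k (m + 1))) = 0 := by
        rw [pow_two, mul_assoc, show (1:ℕ) = 0 + 1 from rfl, PowerSeries.coeff_succ_X_mul,
          PowerSeries.coeff_zero_X_mul]
      rw [map_add, map_add, e1, e2, coeff_FpltkBdd, S_one, S_zero, PowerSeries.coeff_one,
        if_neg one_ne_zero]
      ring
    | (j + 2) =>
      have e1 : PowerSeries.coeff (R := Polynomial ℚ) (j + 2)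
          (PowerSeries.X * FpltkBdd k (m + 1)) = S k (m + 1) (j + 1) := by
        rw [show j + 2 = (j + 1) + 1 from rfl, PowerSeries.coeff_succ_X_mul, coeff_FpltkBdd]
      have e2 : PowerSeries.coeff (R := Polynomial ℚ) (j + 2)
          (PowerSeries.X ^ 2 * (G * FpltkBdd k (m + 1))) =
          PowerSeries.coeff (R := Polynomial ℚ) j (G * FpltkBdd k (m + 1)) := by
        exact PowerSeries.coeff_X_pow_mul _ 2 j
      rw [map_add, map_add, e1, e2, coeff_FpltkBdd, S_rec, PowerSeries.coeff_one,
        if_neg (by omega : ¬ j + 2 = 0), PowerSeries.coeff_mul]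
      have h3 : ∀ ab ∈ Finset.HasAntidiagonal.antidiagonal j,
          PowerSeries.coeff (R := Polynomial ℚ) ab.1 G *
            PowerSeries.coeff (R := Polynomial ℚ) ab.2 (FpltkBdd k (m + 1)) =
          (S k m ab.1 + (if ab.1 = k then (Polynomial.X : Polynomial ℚ) - 1 else 0)) *
            S k (m + 1) ab.2 := by
        intro ab _
        rw [hGcoeff, coeff_FpltkBdd]
      rw [Finset.sum_congr rfl h3]
      ring
  have hC : PowerSeries.C (R := Polynomial ℚ) (Polynomial.X - 1) =
      PowerSeries.C (R := Polynomial ℚ) Polynomial.X - 1 := by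
    rw [map_sub, map_one]
  rw [hC] at key
  linear_combination key

lemma S_height0 (k n : ℕ) : S k 0 n = 1 := by
  rw [S, Finset.sum_eq_single (List.replicate n Step.F)]
  · rw [wt, if_pos (bdd_replicate n 0), pltk_replicate, pow_zero]
  · intro p hp hne
    rw [mem_pathsF] at hp
    rw [wt, if_neg]
    intro hb
    apply hne
    obtain ⟨⟨-, hnn⟩, hbd⟩ := hb
    have hzero : ∀ i ≤ p.length, ht p i = 0 := by
      intro i hi
      have h1 := hnn i hi
      have h2 := hbd i hi
      simp only [Nat.cast_zero] at h2
      omega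
    apply List.ext_getElem (by simp [hp])
    intro i h1 h2
    rw [List.getElem_replicate]
    have h3 : ht p (i + 1) = ht p i + stepVal p[i] := ht_succ_get p i h1
    rw [hzero i (by omega), hzero (i + 1) (by omega)] at h3
    revert h3
    cases p[i] <;> simp [stepVal]
  · intro habs
    exact absurd (mem_pathsF.mpr (by simp)) habs

lemma F_height0 (k : ℕ) : FpltkBdd k 0 * (1 - PowerSeries.X) = 1 := by
  refine PowerSeries.ext fun n => ?_
  rw [mul_sub, mul_one, map_sub]
  match n with
  | 0 =>
    rw [coeff_FpltkBdd, S_height0, PowerSeries.coeff_zero_mul_X, PowerSeries.coeff_one,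
      if_pos rfl]
    ring
  | (j + 1) =>
    rw [coeff_FpltkBdd, S_height0, PowerSeries.coeff_succ_mul_X, coeff_FpltkBdd, S_height0,
      PowerSeries.coeff_one, if_neg (by omega : ¬ j + 1 = 0)]
    ring


/-- With P₀ = 1, P₁ = 1 − x, P\_m = (1 − x − x^{k+2}(t−1))P\_{m−1} − x²P\_{m−2},
the k-plateau generating function for Motzkin paths of height at most m equals
P\_m / P\_{m+1}, i.e. F\_m · P\_{m+1} = P\_m. -/
theorem bounded_kplateaus_eq_ratio (k : ℕ) (P : ℕ → PowerSeries (Polynomial ℚ))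
    (hP0 : P 0 = 1) (hP1 : P 1 = 1 - PowerSeries.X)
    (hPrec : ∀ m, P (m + 2) =
      (1 - PowerSeries.X - PowerSeries.X ^ (k + 2)
          * (PowerSeries.C (R := Polynomial ℚ) Polynomial.X - 1)) * P (m + 1)
        - PowerSeries.X ^ 2 * P m)
    (m : ℕ) (hm : 1 ≤ m) :
    FpltkBdd k m * P (m + 1) = P m := by
  clear hm
  induction m with
  | zero => rw [hP1, hP0]; exact F_height0 k
  | succ m ih =>
    rw [hPrec m, ← ih]
    linear_combination (P (m + 1)) * funEq k m
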